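/- Let W_d ⊂ W(0,T) be a finite dimensional subspace, y ∈ W(0,T) the solution of b(y,v) = l(v) for all v ∈ W(0,T), y_d ∈ W_d the Galerkin solution, e := y − y_d, and define the residual functional r(v) := l(v) − b(y_d,v) for v ∈ W(0,T). Then b(e,v) = r(v) for all v ∈ W(0,T), and the a posteriori error bound ‖e‖²_{W(0,T)} + ‖e(T)‖²_H ≤ ‖r‖_{W(0,T)*} · ‖e‖_{W(0,T)} holds. -/

import Mathlib

/-!
Abstract setup for the least-squares space-time formulation of the abstract
parabolic (heat) equation, following Hinze–Kahle.

* `V, H` are separable real Hilbert spaces forming a Gelfand triple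
  `V ↪ H ≡ H* ↪ V*` via the embedding `ι : V →L[ℝ] H`.
* `A : V → V*` is linear, bounded, selfadjoint, coercive and boundedly
  invertible with inverse the Riesz lift `R : V* → V`, i.e.
  `⟨l,v⟩_{V*,V} = (R l, v)_V`.  The dual inner product is
  `(l,k)_{V*} = (R l, R k)_V`.
* `W` is the space `W(0,T) = {v ∈ L²(0,T;V) : vₜ ∈ L²(0,T;V*)}`; an element
  `w : W` has an `L²(0,T;V)`-representative `val w : ℝ → V` (whose composition
  with `ι` is the continuous `H`-valued representative) and a weak time
  derivative `dt w : ℝ → V*`.  The `W(0,T)`-inner product is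
  `(u,w) = ∫₀ᵀ (uₜ,wₜ)_{V*} + ∫₀ᵀ (u,w)_V`, the embedding
  `W(0,T) ↪ C([0,T];H)` is continuous, and the fundamental
  integration-by-parts identity
  `‖w(T)‖²_H - ‖w(0)‖²_H = 2∫₀ᵀ ⟨wₜ,w⟩` holds.
-/

open MeasureTheory
open scoped RealInnerProductSpace

noncomputable section

structure SpaceTimeSetup (V H W : Type*)
    [NormedAddCommGroup V] [InnerProductSpace ℝ V] [CompleteSpace V]
    [NormedAddCommGroup H] [InnerProductSpace ℝ H] [CompleteSpace H]
    [NormedAddCommGroup W] [InnerProductSpace ℝ W] [CompleteSpace W] where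
  /-- the final time `T > 0` -/
  T : ℝ
  T_pos : 0 < T
  /-- the embedding `V ↪ H` of the Gelfand triple -/
  ι : V →L[ℝ] H
  ι_inj : Function.Injective ι
  /-- the operator `A : V → V*` -/
  A : V →L[ℝ] StrongDual ℝ V
  /-- the Riesz lift `R = A⁻¹ : V* → V` -/
  R : StrongDual ℝ V →L[ℝ] V
  /-- `⟨l,v⟩_{V*,V} = (R l, v)_V` -/
  riesz : ∀ (l : StrongDual ℝ V) (v : V), l v = ⟪R l, v⟫
  R_A : ∀ v : V, R (A v) = v
  A_R : ∀ l : StrongDual ℝ V, A (R l) = l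
  /-- the `L²(0,T;V)`-representative of an element of `W(0,T)` -/
  val : W →ₗ[ℝ] (ℝ → V)
  /-- the weak time derivative, an element of `L²(0,T;V*)` -/
  dt : W →ₗ[ℝ] (ℝ → StrongDual ℝ V)
  int_val : ∀ u w : W, IntervalIntegrable (fun t => ⟪val u t, val w t⟫) volume 0 T
  int_dt : ∀ u w : W,
    IntervalIntegrable (fun t => ⟪R (dt u t), R (dt w t)⟫) volume 0 T
  int_mix : ∀ u w : W, IntervalIntegrable (fun t => dt u t (val w t)) volume 0 T
  /-- the canonical inner product of `W(0,T)` -/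
  inner_def : ∀ u w : W, ⟪u, w⟫ =
    (∫ t in (0:ℝ)..T, ⟪R (dt u t), R (dt w t)⟫) +
      ∫ t in (0:ℝ)..T, ⟪val u t, val w t⟫
  /-- the continuous embedding `W(0,T) ↪ C([0,T];H)` -/
  emb : ∃ C > 0, ∀ (w : W) (t : ℝ), t ∈ Set.Icc 0 T → ‖ι (val w t)‖ ≤ C * ‖w‖
  /-- `‖w(T)‖²_H - ‖w(0)‖²_H = 2 ∫₀ᵀ ⟨wₜ, w⟩_{V*,V}` -/
  ftc : ∀ w : W, ‖ι (val w T)‖ ^ 2 - ‖ι (val w 0)‖ ^ 2 =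
    2 * ∫ t in (0:ℝ)..T, dt w t (val w t)

variable {V H W : Type*}
    [NormedAddCommGroup V] [InnerProductSpace ℝ V] [CompleteSpace V]
    [NormedAddCommGroup H] [InnerProductSpace ℝ H] [CompleteSpace H]
    [NormedAddCommGroup W] [InnerProductSpace ℝ W] [CompleteSpace W]

/-- the least-squares bilinear form
`b(v,w) = ∫₀ᵀ (vₜ + A v, wₜ + A w)_{V*} + (v(0), w(0))_H` -/
def SpaceTimeSetup.b (S : SpaceTimeSetup V H W) (v w : W) : ℝ :=
  (∫ t in (0:ℝ)..S.T,
      ⟪S.R (S.dt v t + S.A (S.val v t)), S.R (S.dt w t + S.A (S.val w t))⟫) +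
    ⟪S.ι (S.val v 0), S.ι (S.val w 0)⟫

/-- the right-hand side linear form
`l(v) = ∫₀ᵀ (f, vₜ + A v)_{V*} + (y₀, v(0))_H` -/
def SpaceTimeSetup.lform (S : SpaceTimeSetup V H W)
    (f : ℝ → StrongDual ℝ V) (y₀ : H) (v : W) : ℝ :=
  (∫ t in (0:ℝ)..S.T, ⟪S.R (f t), S.R (S.dt v t + S.A (S.val v t))⟫) +
    ⟪y₀, S.ι (S.val v 0)⟫

lemma SpaceTimeSetup.expand (S : SpaceTimeSetup V H W) (v w : W) (t : ℝ) :
    ⟪S.R (S.dt v t + S.A (S.val v t)), S.R (S.dt w t + S.A (S.val w t))⟫ =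
      ⟪S.R (S.dt v t), S.R (S.dt w t)⟫ + S.dt v t (S.val w t) + S.dt w t (S.val v t)
        + ⟪S.val v t, S.val w t⟫ := by
  have h1 : S.dt v t (S.val w t) = ⟪S.R (S.dt v t), S.val w t⟫ := S.riesz _ _
  have h2 : S.dt w t (S.val v t) = ⟪S.R (S.dt w t), S.val v t⟫ := S.riesz _ _
  have h3 : ⟪S.val v t, S.R (S.dt w t)⟫ = S.dt w t (S.val v t) := by
    rw [real_inner_comm]; exact (S.riesz _ _).symm
  rw [map_add, map_add, S.R_A, S.R_A, inner_add_left, inner_add_right, inner_add_right,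
    ← h1, h3]
  ring

lemma SpaceTimeSetup.int_full (S : SpaceTimeSetup V H W) (u w : W) :
    IntervalIntegrable
      (fun t => ⟪S.R (S.dt u t + S.A (S.val u t)), S.R (S.dt w t + S.A (S.val w t))⟫)
      volume 0 S.T := by
  have h : (fun t => ⟪S.R (S.dt u t + S.A (S.val u t)), S.R (S.dt w t + S.A (S.val w t))⟫)
      = fun t => ⟪S.R (S.dt u t), S.R (S.dt w t)⟫ + S.dt u t (S.val w t)
          + S.dt w t (S.val u t) + ⟪S.val u t, S.val w t⟫ :=
    funext fun t => S.expand u w t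
  rw [h]
  exact (((S.int_dt u w).add (S.int_mix u w)).add (S.int_mix w u)).add (S.int_val u w)

lemma SpaceTimeSetup.b_expand (S : SpaceTimeSetup V H W) (v w : W) :
    S.b v w = (((∫ t in (0:ℝ)..S.T, ⟪S.R (S.dt v t), S.R (S.dt w t)⟫)
        + ∫ t in (0:ℝ)..S.T, S.dt v t (S.val w t))
        + ∫ t in (0:ℝ)..S.T, S.dt w t (S.val v t))
        + (∫ t in (0:ℝ)..S.T, ⟪S.val v t, S.val w t⟫)
        + ⟪S.ι (S.val v 0), S.ι (S.val w 0)⟫ := by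
  unfold SpaceTimeSetup.b
  have h : (fun t => ⟪S.R (S.dt v t + S.A (S.val v t)), S.R (S.dt w t + S.A (S.val w t))⟫)
      = fun t => ⟪S.R (S.dt v t), S.R (S.dt w t)⟫ + S.dt v t (S.val w t)
          + S.dt w t (S.val v t) + ⟪S.val v t, S.val w t⟫ :=
    funext fun t => S.expand v w t
  rw [h, intervalIntegral.integral_add (((S.int_dt v w).add (S.int_mix v w)).add (S.int_mix w v))
      (S.int_val v w),
    intervalIntegral.integral_add ((S.int_dt v w).add (S.int_mix v w)) (S.int_mix w v),
    intervalIntegral.integral_add (S.int_dt v w) (S.int_mix v w)]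

lemma SpaceTimeSetup.b_sub (S : SpaceTimeSetup V H W) (u₁ u₂ w : W) :
    S.b (u₁ - u₂) w = S.b u₁ w - S.b u₂ w := by
  unfold SpaceTimeSetup.b
  have h : (fun t => ⟪S.R (S.dt (u₁ - u₂) t + S.A (S.val (u₁ - u₂) t)),
        S.R (S.dt w t + S.A (S.val w t))⟫)
      = fun t => ⟪S.R (S.dt u₁ t + S.A (S.val u₁ t)), S.R (S.dt w t + S.A (S.val w t))⟫
          - ⟪S.R (S.dt u₂ t + S.A (S.val u₂ t)), S.R (S.dt w t + S.A (S.val w t))⟫ := by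
    funext t
    have hd : S.dt (u₁ - u₂) t + S.A (S.val (u₁ - u₂) t)
        = (S.dt u₁ t + S.A (S.val u₁ t)) - (S.dt u₂ t + S.A (S.val u₂ t)) := by
      simp only [map_sub, Pi.sub_apply]
      abel
    rw [hd, map_sub, inner_sub_left]
  have h0 : S.ι (S.val (u₁ - u₂) 0) = S.ι (S.val u₁ 0) - S.ι (S.val u₂ 0) := by
    simp only [map_sub, Pi.sub_apply]
  rw [h, intervalIntegral.integral_sub (S.int_full u₁ w) (S.int_full u₂ w), h0, inner_sub_left]
  ring

lemma SpaceTimeSetup.b_self (S : SpaceTimeSetup V H W) (e : W) :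
    S.b e e = ‖e‖ ^ 2 + ‖S.ι (S.val e S.T)‖ ^ 2 := by
  rw [S.b_expand e e]
  have hn : ‖e‖ ^ 2 = (∫ t in (0:ℝ)..S.T, ⟪S.R (S.dt e t), S.R (S.dt e t)⟫)
      + ∫ t in (0:ℝ)..S.T, ⟪S.val e t, S.val e t⟫ := by
    rw [← real_inner_self_eq_norm_sq, S.inner_def]
  have hf := S.ftc e
  have h0 : ⟪S.ι (S.val e 0), S.ι (S.val e 0)⟫ = ‖S.ι (S.val e 0)‖ ^ 2 :=
    real_inner_self_eq_norm_sq _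
  rw [h0]
  linarith

/-- a posteriori bound: with the residual
`r(v) = l(v) - b(y_d, v)` one has `b(e,v) = r(v)` for all `v ∈ W(0,T)` and
`‖e‖²_{W(0,T)} + ‖e(T)‖²_H ≤ ‖r‖_{W(0,T)*} ‖e‖_{W(0,T)}` for the error
`e = y - y_d`. -/
theorem aposteriori_bound (S : SpaceTimeSetup V H W)
    (f : ℝ → StrongDual ℝ V) (y₀ : H)
    (Wd : Submodule ℝ W) (hWd : FiniteDimensional ℝ Wd)
    (y yd : W) (hy : ∀ v : W, S.b y v = S.lform f y₀ v)
    (hyd_mem : yd ∈ Wd) (hyd : ∀ vd ∈ Wd, S.b yd vd = S.lform f y₀ vd)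
    (r : W →L[ℝ] ℝ) (hr : ∀ v : W, r v = S.lform f y₀ v - S.b yd v) :
    (∀ v : W, S.b (y - yd) v = r v) ∧
      ‖y - yd‖ ^ 2 + ‖S.ι (S.val (y - yd) S.T)‖ ^ 2 ≤ ‖r‖ * ‖y - yd‖ := by
  have part1 : ∀ v : W, S.b (y - yd) v = r v := by
    intro v
    rw [S.b_sub y yd v, hy v, hr v]
  refine ⟨part1, ?_⟩
  have h1 : ‖y - yd‖ ^ 2 + ‖S.ι (S.val (y - yd) S.T)‖ ^ 2 = r (y - yd) := by
    rw [← part1 (y - yd), S.b_self (y - yd)]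
  have h2 : r (y - yd) ≤ ‖r (y - yd)‖ := le_abs_self _
  have h3 : ‖r (y - yd)‖ ≤ ‖r‖ * ‖y - yd‖ := r.le_opNorm _
  linarith
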